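/- Let n >= 10^9 be odd and k even with 2n/5 < k < n/2, and let G be an n-vertex k-regular graph with T(G) <= (k/4)(3k - n - 1). Let H be the subgraph of heavy edges (edges in at least (3k-n-1)/3 triangles). Then |E(H)| <= 9k/4. -/

import Mathlib

open Finset SimpleGraph

lemma sym2_of_pair_eq {α : Type*} [DecidableEq α] {a b c d : α}
    (h : ({a, b} : Finset α) = {c, d}) : (s(a, b) : Sym2 α) = s(c, d) := by
  have ha : a = c ∨ a = d := by
    have := h ▸ Finset.mem_insert_self a {b}; simpa using this
  have hb : b = c ∨ b = d := by
    have : b ∈ ({a, b} : Finset α) := by simp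
    rw [h] at this; simpa using this
  have hc : c = a ∨ c = b := by
    have : c ∈ ({c, d} : Finset α) := by simp
    rw [← h] at this; simpa using this
  have key : (a = c ∧ b = d) ∨ (a = d ∧ b = c) := by
    have h' : ({a, b} : Set α) = {c, d} := by
      have := congrArg (fun s : Finset α => (s : Set α)) h
      simpa using this
    exact Set.pair_eq_pair_iff.mp h'
  rw [Sym2.eq_iff]; tauto

lemma sum_codeg_le {V : Type*} [Fintype V] [DecidableEq V] (G : SimpleGraph V)
    [DecidableRel G.Adj] :
    ∑ e ∈ G.edgeFinset, (Sym2.lift ⟨fun u v => (G.neighborFinset u ∩ G.neighborFinset v).card,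
        fun u v => by simp [Finset.inter_comm]⟩ e) ≤ 3 * (G.cliqueFinset 3).card := by
  set cn : Sym2 V → Finset V :=
    Sym2.lift ⟨fun u v => G.neighborFinset u ∩ G.neighborFinset v,
      fun u v => by simp [Finset.inter_comm]⟩ with hcn
  set sv : Sym2 V → Finset V :=
    Sym2.lift ⟨fun u v => {u, v}, fun u v => by simp [Finset.pair_comm]⟩ with hsv
  have hcard : ∀ e : Sym2 V,
      (Sym2.lift ⟨fun u v => (G.neighborFinset u ∩ G.neighborFinset v).card,
        fun u v => by simp [Finset.inter_comm]⟩ e) = (cn e).card := by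
    intro e; induction e using Sym2.ind with | _ u v => rfl
  calc ∑ e ∈ G.edgeFinset, (Sym2.lift ⟨fun u v =>
          (G.neighborFinset u ∩ G.neighborFinset v).card,
          fun u v => by simp [Finset.inter_comm]⟩ e)
      = (G.edgeFinset.sigma cn).card := by
        rw [Finset.card_sigma]; exact Finset.sum_congr rfl fun e _ => hcard e
    _ ≤ 3 * (G.cliqueFinset 3).card := by
        apply Finset.card_le_mul_card_image_of_maps_to
          (f := fun p : Σ _ : Sym2 V, V => insert p.2 (sv p.1))
        · rintro ⟨e, w⟩ hp
          rw [Finset.mem_sigma] at hp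
          revert hp
          induction e using Sym2.ind with | _ u v =>
          rintro ⟨he, hw⟩
          rw [SimpleGraph.mem_edgeFinset, SimpleGraph.mem_edgeSet] at he
          have hw' : w ∈ G.neighborFinset u ∩ G.neighborFinset v := hw
          rw [Finset.mem_inter, SimpleGraph.mem_neighborFinset,
            SimpleGraph.mem_neighborFinset] at hw'
          rw [SimpleGraph.mem_cliqueFinset_iff]
          have : insert w (sv s(u, v)) = {w, u, v} := rfl
          rw [this, SimpleGraph.is3Clique_triple_iff]
          exact ⟨hw'.1.symm, hw'.2.symm, he⟩
        · intro t ht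
          have ht3 : t.card = 3 := (SimpleGraph.mem_cliqueFinset_iff.mp ht).2
          have := Finset.card_le_card_of_injOn
            (f := fun p : Σ _ : Sym2 V, V => p.2)
            (s := (G.edgeFinset.sigma cn).filter
              (fun p => insert p.2 (sv p.1) = t)) (t := t) ?_ ?_
          · omega
          · rintro ⟨e, w⟩ hp
            rw [Finset.mem_coe, Finset.mem_filter] at hp
            have := hp.2
            simp only at this ⊢
            rw [← this]; exact Finset.mem_insert_self _ _
          · rintro ⟨e, w⟩ hp ⟨e', w'⟩ hq h
            simp only at h
            subst h
            rw [Finset.mem_coe, Finset.mem_filter, Finset.mem_sigma] at hp hq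
            have hnw : w ∉ sv e := by
              revert hp
              induction e using Sym2.ind with | _ u v =>
              rintro ⟨⟨-, hw⟩, -⟩
              have hw' : w ∈ G.neighborFinset u ∩ G.neighborFinset v := hw
              rw [Finset.mem_inter, SimpleGraph.mem_neighborFinset,
                SimpleGraph.mem_neighborFinset] at hw'
              have : sv s(u, v) = {u, v} := rfl
              rw [this]
              simp only [Finset.mem_insert, Finset.mem_singleton]
              push_neg
              exact ⟨fun h => G.irrefl (h ▸ hw'.1), fun h => G.irrefl (h ▸ hw'.2)⟩
            have hnw' : w ∉ sv e' := by
              revert hq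
              induction e' using Sym2.ind with | _ u v =>
              rintro ⟨⟨-, hw⟩, -⟩
              have hw' : w ∈ G.neighborFinset u ∩ G.neighborFinset v := hw
              rw [Finset.mem_inter, SimpleGraph.mem_neighborFinset,
                SimpleGraph.mem_neighborFinset] at hw'
              have : sv s(u, v) = {u, v} := rfl
              rw [this]
              simp only [Finset.mem_insert, Finset.mem_singleton]
              push_neg
              exact ⟨fun h => G.irrefl (h ▸ hw'.1), fun h => G.irrefl (h ▸ hw'.2)⟩
            have hsve : sv e = sv e' := by
              have h1 : (insert w (sv e)).erase w = sv e := Finset.erase_insert hnw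
              have h2 : (insert w (sv e')).erase w = sv e' := Finset.erase_insert hnw'
              simp only at hp hq
              rw [← h1, ← h2, hp.2, hq.2]
            have : e = e' := by
              induction e using Sym2.ind with | _ a b =>
              induction e' using Sym2.ind with | _ c d =>
              exact sym2_of_pair_eq hsve
            subst this
            rfl

lemma heavy_aux {V : Type*} [Fintype V] [DecidableEq V] (G : SimpleGraph V)
    [DecidableRel G.Adj] (k : ℕ) (f : Sym2 V → ℕ)
    (hfsum : ∑ e ∈ G.edgeFinset, f e ≤ 3 * (G.cliqueFinset 3).card)
    (t : ℤ) (ht : 0 < t) (p : Sym2 V → Prop) [DecidablePred p]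
    (hp : ∀ e ∈ G.edgeFinset, p e → t ≤ 3 * (f e : ℤ))
    (hT : 4 * ((G.cliqueFinset 3).card : ℤ) ≤ k * t) :
    4 * ((G.edgeFinset.filter p).card : ℤ) ≤ 9 * k := by
  set F := G.edgeFinset.filter p with hF
  have h1 : ∀ e ∈ F, t ≤ 3 * (f e : ℤ) := by
    intro e he
    rw [hF, Finset.mem_filter] at he
    exact hp e he.1 he.2
  have h2 : (F.card : ℤ) * t ≤ ∑ e ∈ F, 3 * (f e : ℤ) := by
    calc (F.card : ℤ) * t = ∑ _e ∈ F, t := by rw [Finset.sum_const, nsmul_eq_mul]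
      _ ≤ ∑ e ∈ F, 3 * (f e : ℤ) := Finset.sum_le_sum h1
  have h3 : ∑ e ∈ F, 3 * (f e : ℤ) = 3 * ((∑ e ∈ F, f e : ℕ) : ℤ) := by
    push_cast [Finset.mul_sum]; ring
  have h4 : ∑ e ∈ F, f e ≤ ∑ e ∈ G.edgeFinset, f e :=
    Finset.sum_le_sum_of_subset (Finset.filter_subset _ _)
  have hc : ((∑ e ∈ F, f e : ℕ) : ℤ) ≤ 3 * ((G.cliqueFinset 3).card : ℤ) := by
    exact_mod_cast le_trans h4 hfsum
  have h5 : (F.card : ℤ) * t ≤ 9 * ((G.cliqueFinset 3).card : ℤ) := by linarith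
  exact le_of_mul_le_mul_right
    (by linarith : 4 * (F.card : ℤ) * t ≤ 9 * (k : ℤ) * t) ht

theorem stmt17 {V : Type*} [Fintype V] [DecidableEq V] (G : SimpleGraph V)
    [DecidableRel G.Adj] (n k : ℕ) (hn : Fintype.card V = n)
    (hn9 : 10 ^ 9 ≤ n) (hodd : Odd n) (heven : Even k)
    (hk1 : 2 * n < 5 * k) (hk2 : 2 * k < n)
    (hreg : G.IsRegularOfDegree k)
    (hT : 4 * ((G.cliqueFinset 3).card : ℤ) ≤ k * (3 * k - n - 1)) :
    4 * ((G.edgeFinset.filter fun e =>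
        3 * ((Sym2.lift ⟨fun u v => (G.neighborFinset u ∩ G.neighborFinset v).card,
          fun u v => by simp [Finset.inter_comm]⟩ e : ℕ) : ℤ) ≥ 3 * k - n - 1).card : ℤ) ≤
      9 * k := by
  have ht0 : (0 : ℤ) < 3 * (k : ℤ) - (n : ℤ) - 1 := by
    have h1 : (2 * n : ℤ) < 5 * k := by exact_mod_cast hk1
    have h2 : ((10 : ℤ) ^ 9) ≤ n := by exact_mod_cast hn9
    norm_num at h2 ⊢
    linarith
  exact heavy_aux G k _ (sum_codeg_le G) (3 * (k : ℤ) - n - 1) ht0 _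
    (fun e _ hpe => hpe) hT
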